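/- (Spectral equivalence of the system operator and the quadratic pencil) For every ζ ∈ ℂ, det(ζ·1_{2N} − A(β)) = det C(ζ,β) / det α. Consequently the spectrum of the system operator equals the spectrum of the pencil: σ(A(β)) = { ζ ∈ ℂ : det C(ζ,β) = 0 }. -/

import Mathlib

open Matrix
open scoped ComplexOrder

noncomputable section

variable {N : ℕ}

/-- A real matrix viewed as a complex matrix. -/
def cm (M : Matrix (Fin N) (Fin N) ℝ) : Matrix (Fin N) (Fin N) ℂ :=
  M.map Complex.ofReal

/-- The quadratic matrix pencil `C(ζ,β) = ζ²α + iζ(2θ + βR) − η`. -/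
def pencil (α η θ R : Matrix (Fin N) (Fin N) ℝ) (β : ℝ) (ζ : ℂ) :
    Matrix (Fin N) (Fin N) ℂ :=
  ζ ^ 2 • cm α + (Complex.I * ζ) • ((2 : ℂ) • cm θ + (β : ℂ) • cm R) - cm η

/-- The positive semidefinite square root (Mathlib's removed `Matrix.PosSemidef.sqrt`,
restored with its old definition). -/
def Matrix.PosSemidef.sqrt {n : Type*} [Fintype n] [DecidableEq n] {A : Matrix n n ℂ}
    (hA : A.PosSemidef) : Matrix n n ℂ :=
  hA.1.eigenvectorUnitary.1 * diagonal ((↑) ∘ (√·) ∘ hA.1.eigenvalues) *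
    (star hA.1.eigenvectorUnitary : Matrix n n ℂ)

/-- `K_p = (√α)⁻¹`. -/
def Kp {α : Matrix (Fin N) (Fin N) ℝ} (hα : (cm α).PosDef) : Matrix (Fin N) (Fin N) ℂ :=
  (hα.posSemidef.sqrt)⁻¹

/-- `Φ = √η · K_p`. -/
def Phi {α η : Matrix (Fin N) (Fin N) ℝ} (hα : (cm α).PosDef) (hη : (cm η).PosSemidef) :
    Matrix (Fin N) (Fin N) ℂ :=
  hη.sqrt * Kp hα

/-- `R̃ = K_p R K_p`. -/
def Rt (R : Matrix (Fin N) (Fin N) ℝ) {α : Matrix (Fin N) (Fin N) ℝ} (hα : (cm α).PosDef) :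
    Matrix (Fin N) (Fin N) ℂ :=
  Kp hα * cm R * Kp hα

/-- `Ω_p = −2i K_p θ K_p`. -/
def Omp (θ : Matrix (Fin N) (Fin N) ℝ) {α : Matrix (Fin N) (Fin N) ℝ} (hα : (cm α).PosDef) :
    Matrix (Fin N) (Fin N) ℂ :=
  ((-2 : ℂ) * Complex.I) • (Kp hα * cm θ * Kp hα)

/-- `Ω = [[Ω_p, −iΦᵀ],[iΦ, 0]]`. -/
def Om (θ : Matrix (Fin N) (Fin N) ℝ) {α η : Matrix (Fin N) (Fin N) ℝ}
    (hα : (cm α).PosDef) (hη : (cm η).PosSemidef) :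
    Matrix (Fin N ⊕ Fin N) (Fin N ⊕ Fin N) ℂ :=
  fromBlocks (Omp θ hα) ((-Complex.I) • (Phi hα hη)ᵀ) (Complex.I • Phi hα hη) 0

/-- `B = [[R̃, 0],[0, 0]]`. -/
def Bm (R : Matrix (Fin N) (Fin N) ℝ) {α : Matrix (Fin N) (Fin N) ℝ} (hα : (cm α).PosDef) :
    Matrix (Fin N ⊕ Fin N) (Fin N ⊕ Fin N) ℂ :=
  fromBlocks (Rt R hα) 0 0 0

/-- The system operator `A(β) = Ω − iβB`. -/
def Asys (θ R : Matrix (Fin N) (Fin N) ℝ) {α η : Matrix (Fin N) (Fin N) ℝ}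
    (hα : (cm α).PosDef) (hη : (cm η).PosSemidef) (β : ℝ) :
    Matrix (Fin N ⊕ Fin N) (Fin N ⊕ Fin N) ℂ :=
  Om θ hα hη - (Complex.I * (β : ℂ)) • Bm R hα

/-- The ℓ²→ℓ² operator norm of a complex matrix. -/
def opN {n : Type*} [Fintype n] [DecidableEq n] (M : Matrix n n ℂ) : ℝ :=
  ‖Matrix.toEuclideanCLM (𝕜 := ℂ) M‖

/-- `ω_max = ‖Ω‖`. -/
def omegaMax (θ : Matrix (Fin N) (Fin N) ℝ) {α η : Matrix (Fin N) (Fin N) ℝ}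
    (hα : (cm α).PosDef) (hη : (cm η).PosSemidef) : ℝ :=
  opN (Om θ hα hη)

/-- `b_min`, the smallest nonzero eigenvalue of `B`. -/
def bMin (R : Matrix (Fin N) (Fin N) ℝ) {α : Matrix (Fin N) (Fin N) ℝ} (hα : (cm α).PosDef) : ℝ :=
  sInf {r : ℝ | r ≠ 0 ∧ (r : ℂ) ∈ spectrum ℂ (Bm R hα)}

section aux

variable {n : Type*} [Fintype n] [DecidableEq n]

lemma aux_det_swap :
    (fromBlocks (0 : Matrix n n ℂ) (1 : Matrix n n ℂ) (1 : Matrix n n ℂ) (0 : Matrix n n ℂ)).det = (-1) ^ (Fintype.card n) := by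
  have h : fromBlocks (1 : Matrix n n ℂ) (1 : Matrix n n ℂ) (0 : Matrix n n ℂ) (1 : Matrix n n ℂ) * fromBlocks 1 0 (-1) 1 *
      fromBlocks 1 1 0 1 * fromBlocks (-1) 0 0 1 = fromBlocks (0 : Matrix n n ℂ) (1 : Matrix n n ℂ) (1 : Matrix n n ℂ) (0 : Matrix n n ℂ) := by
    simp [Matrix.fromBlocks_multiply]
  rw [← h, det_mul, det_mul, det_mul, det_fromBlocks_zero₂₁, det_fromBlocks_zero₁₂,
    det_fromBlocks_zero₂₁]
  simp [det_neg]

lemma aux_det_blocks (A B C : Matrix n n ℂ) (ζ : ℂ) :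
    (fromBlocks A B C (ζ • (1 : Matrix n n ℂ))).det = (ζ • A - B * C).det := by
  rcases eq_or_ne ζ 0 with rfl | hζ
  · have h : fromBlocks A B C ((0 : ℂ) • (1 : Matrix n n ℂ)) =
        fromBlocks B A 0 C * fromBlocks (0 : Matrix n n ℂ) (1 : Matrix n n ℂ) (1 : Matrix n n ℂ) (0 : Matrix n n ℂ) := by
      simp [Matrix.fromBlocks_multiply]
    rw [h, det_mul, aux_det_swap, det_fromBlocks_zero₂₁, zero_smul, zero_sub, det_neg, det_mul]
    ring
  · haveI : Invertible (ζ • (1 : Matrix n n ℂ)) :=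
      ⟨ζ⁻¹ • 1, by simp [smul_smul, inv_mul_cancel₀ hζ, mul_inv_cancel₀ hζ], by simp [smul_smul, inv_mul_cancel₀ hζ, mul_inv_cancel₀ hζ]⟩
    have hinv : ⅟(ζ • (1 : Matrix n n ℂ)) = ζ⁻¹ • 1 :=
      invOf_eq_right_inv (by simp [smul_smul, mul_inv_cancel₀ hζ, inv_mul_cancel₀ hζ])
    rw [det_fromBlocks₂₂, hinv]
    have h1 : A - B * (ζ⁻¹ • (1 : Matrix n n ℂ)) * C = A - ζ⁻¹ • (B * C) := by
      rw [Matrix.mul_smul, Matrix.mul_one, Matrix.smul_mul]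
    have h2 : ζ • A - B * C = ζ • (A - ζ⁻¹ • (B * C)) := by
      rw [smul_sub, smul_smul, mul_inv_cancel₀ hζ, one_smul]
    rw [h1, h2, det_smul, det_smul, det_one]
    ring

section sqrtport

open scoped MatrixOrder

lemma Matrix.PosSemidef.sqrt_eq_cfcSqrt {M : Matrix n n ℂ} (hM : M.PosSemidef) :
    hM.sqrt = CFC.sqrt M := by
  rw [CFC.sqrt_eq_cfc, cfc_nnreal_eq_real _ M, hM.1.cfc_eq]
  simp only [IsHermitian.cfc, Matrix.PosSemidef.sqrt, Unitary.conjStarAlgAut_apply]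
  congr 3
  funext i
  simp [Real.coe_toNNReal', hM.eigenvalues_nonneg i]

lemma Matrix.PosSemidef.sq_sqrt {M : Matrix n n ℂ} (hM : M.PosSemidef) : hM.sqrt ^ 2 = M := by
  rw [hM.sqrt_eq_cfcSqrt]; exact CFC.sq_sqrt M hM.nonneg

lemma Matrix.PosSemidef.sqrt_mul_self {M : Matrix n n ℂ} (hM : M.PosSemidef) :
    hM.sqrt * hM.sqrt = M := by
  rw [hM.sqrt_eq_cfcSqrt]; exact CFC.sqrt_mul_sqrt_self M hM.nonneg

lemma Matrix.PosSemidef.posSemidef_sqrt {M : Matrix n n ℂ} (hM : M.PosSemidef) :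
    hM.sqrt.PosSemidef := by
  rw [hM.sqrt_eq_cfcSqrt]; exact (CFC.sqrt_nonneg M).posSemidef

lemma Matrix.PosSemidef.eq_sqrt_of_sq_eq {B M : Matrix n n ℂ} (hB : B.PosSemidef)
    (hM : M.PosSemidef) (h : B ^ 2 = M) : B = hM.sqrt := by
  rw [hM.sqrt_eq_cfcSqrt, eq_comm, CFC.sqrt_eq_iff _ _ hM.nonneg hB.nonneg, ← sq, h]

end sqrtport

lemma aux_sqrt_transpose {M : Matrix n n ℂ} (hM : M.PosSemidef) (h : Mᵀ = M) :
    (hM.sqrt)ᵀ = hM.sqrt := by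
  have h2 : (hM.sqrt)ᵀ ^ 2 = M := by
    rw [pow_two, ← Matrix.transpose_mul, ← pow_two, hM.sq_sqrt, h]
  exact hM.posSemidef_sqrt.transpose.eq_sqrt_of_sq_eq hM h2

end aux

lemma cm_transpose_of_herm {N : ℕ} {M : Matrix (Fin N) (Fin N) ℝ}
    (h : (cm M).IsHermitian) : (cm M)ᵀ = cm M := by
  have : (cm M)ᴴ = (cm M)ᵀ := by
    ext i j
    simp [cm, Matrix.conjTranspose_apply]
  rw [← this]
  exact h

/-- **Spectral equivalence of the system operator and the quadratic pencil.**
`det(ζ·1 − A(β)) = det C(ζ,β) / det α` for all `ζ`, and hence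
`σ(A(β)) = {ζ : det C(ζ,β) = 0}`. -/
theorem spectral_equivalence
    {N : ℕ} (hN : 1 ≤ N)
    (α η θ R : Matrix (Fin N) (Fin N) ℝ)
    (hα : (cm α).PosDef) (hη : (cm η).PosSemidef)
    (hθ : θᵀ = -θ) (hR : (cm R).PosSemidef)
    (β : ℝ) (hβ : 0 ≤ β) :
    (∀ ζ : ℂ,
      (ζ • (1 : Matrix (Fin N ⊕ Fin N) (Fin N ⊕ Fin N) ℂ) - Asys θ R hα hη β).det =
        (pencil α η θ R β ζ).det / (cm α).det) ∧
    spectrum ℂ (Asys θ R hα hη β) = {ζ : ℂ | (pencil α η θ R β ζ).det = 0} := by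
  set S := hα.posSemidef.sqrt with hSdef
  set T := hη.sqrt with hTdef
  have hαt : (cm α)ᵀ = cm α := cm_transpose_of_herm hα.1
  have hηt : (cm η)ᵀ = cm η := cm_transpose_of_herm hη.1
  have hSt : Sᵀ = S := aux_sqrt_transpose hα.posSemidef hαt
  have hTt : Tᵀ = T := aux_sqrt_transpose hη hηt
  have hSS : S * S = cm α := hα.posSemidef.sqrt_mul_self
  have hTT : T * T = cm η := hη.sqrt_mul_self
  have hdetα : (cm α).det ≠ 0 := hα.det_pos.ne'
  have hdetS2 : S.det * S.det = (cm α).det := by rw [← det_mul, hSS]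
  have hdetS : S.det ≠ 0 := by
    intro h
    rw [← hdetS2, h, mul_zero] at hdetα
    exact hdetα rfl
  have hSu : IsUnit S.det := isUnit_iff_ne_zero.mpr hdetS
  have hKS : Kp hα * S = 1 := Matrix.nonsing_inv_mul S hSu
  have hSK : S * Kp hα = 1 := Matrix.mul_nonsing_inv S hSu
  have hKt : (Kp hα)ᵀ = Kp hα := by
    rw [Kp, Matrix.transpose_nonsing_inv, hSt]
  have hKαK : Kp hα * cm α * Kp hα = 1 := by
    rw [← hSS, show Kp hα * (S * S) * Kp hα = (Kp hα * S) * (S * Kp hα) by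
      simp only [Matrix.mul_assoc], hKS, hSK, Matrix.one_mul]
  have hdetK : (Kp hα).det = S.det⁻¹ := by
    rw [Kp, Matrix.det_nonsing_inv, Ring.inverse_eq_inv']
  have hΦt : (Phi hα hη)ᵀ = Kp hα * T := by
    rw [Phi, Matrix.transpose_mul, hKt, hTt]
  have hΦΦ : (Phi hα hη)ᵀ * Phi hα hη = Kp hα * cm η * Kp hα := by
    rw [hΦt, Phi, show Kp hα * T * (T * Kp hα) = Kp hα * (T * T) * Kp hα by
      simp only [Matrix.mul_assoc], hTT]
  have hdet : ∀ ζ : ℂ,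
      (ζ • (1 : Matrix (Fin N ⊕ Fin N) (Fin N ⊕ Fin N) ℂ) - Asys θ R hα hη β).det =
        (pencil α η θ R β ζ).det / (cm α).det := by
    intro ζ
    have hblock : ζ • (1 : Matrix (Fin N ⊕ Fin N) (Fin N ⊕ Fin N) ℂ) - Asys θ R hα hη β =
        fromBlocks (ζ • 1 - Omp θ hα + (Complex.I * (β : ℂ)) • Rt R hα)
          (Complex.I • (Phi hα hη)ᵀ) ((-Complex.I) • Phi hα hη)
          (ζ • (1 : Matrix (Fin N) (Fin N) ℂ)) := by
      ext i j
      rcases i with i | i <;> rcases j with j | j <;>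
        simp [Asys, Om, Bm, Matrix.one_apply] <;> ring
    have hmul : (Complex.I • (Phi hα hη)ᵀ) * ((-Complex.I) • Phi hα hη) =
        (Phi hα hη)ᵀ * Phi hα hη := by
      rw [Matrix.smul_mul, Matrix.mul_smul, smul_smul]
      norm_num [Complex.I_mul_I]
    have hmid : ζ • (ζ • 1 - Omp θ hα + (Complex.I * (β : ℂ)) • Rt R hα) -
        (Complex.I • (Phi hα hη)ᵀ) * ((-Complex.I) • Phi hα hη) =
        Kp hα * pencil α η θ R β ζ * Kp hα := by
      rw [hmul, hΦΦ, pencil, Omp, Rt, ← hKαK]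
      simp only [Matrix.mul_add, Matrix.add_mul, Matrix.mul_sub, Matrix.sub_mul,
        Matrix.smul_mul, Matrix.mul_smul, smul_smul, smul_add, smul_sub, Matrix.mul_assoc]
      module
    rw [hblock, aux_det_blocks, hmid, det_mul, det_mul, hdetK, ← hdetS2]
    field_simp
  refine ⟨hdet, ?_⟩
  ext ζ
  rw [Set.mem_setOf_eq, spectrum.mem_iff, Algebra.algebraMap_eq_smul_one,
    Matrix.isUnit_iff_isUnit_det, isUnit_iff_ne_zero, not_not, hdet ζ,
    div_eq_zero_iff]
  constructor
  · rintro (h | h)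
    · exact h
    · exact absurd h hdetα
  · exact fun h => Or.inl h
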